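/- Let m : ℝ → ℝ be a nonnegative integrable function and let K : ℝ → ℝ → Matrix (Fin 2) (Fin 2) ℂ be measurable with operator norm ‖K(x, τ)‖ ≤ m(τ) whenever τ ≤ x. Let v : ℕ → ℝ → (Fin 2 → ℂ) satisfy ‖v 0 x‖ ≤ 1 for all x and v (n+1) x = ∫_{-∞}^{x} K(x, τ) · (v n τ) dτ for every n and x. Then for all n ∈ ℕ and x ∈ ℝ, ‖v n x‖ ≤ (∫_{-∞}^{x} m)ⁿ / n!; consequently the series ∑ₙ v n x converges absolutely and uniformly on ℝ, with ‖∑ₙ v n x‖ ≤ exp(∫_ℝ m). -/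

import Mathlib

open Matrix MeasureTheory Set Filter Topology

section Aux

variable {m : ℝ → ℝ}

private lemma M_mono (hm_nonneg : ∀ τ : ℝ, 0 ≤ m τ) (hm_int : Integrable m) :
    Monotone fun x => ∫ τ in Set.Iic x, m τ := by
  intro a b hab
  exact setIntegral_mono_set hm_int.integrableOn
    (Eventually.of_forall fun τ => hm_nonneg τ) (Eventually.of_forall (Iic_subset_Iic.2 hab))

private lemma M_nonneg (hm_nonneg : ∀ τ : ℝ, 0 ≤ m τ) (x : ℝ) :
    0 ≤ ∫ τ in Set.Iic x, m τ :=
  setIntegral_nonneg measurableSet_Iic fun τ _ => hm_nonneg τ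

private lemma M_le (hm_nonneg : ∀ τ : ℝ, 0 ≤ m τ) (hm_int : Integrable m) (x : ℝ) :
    (∫ τ in Set.Iic x, m τ) ≤ ∫ τ : ℝ, m τ :=
  setIntegral_le_integral hm_int (Eventually.of_forall fun τ => hm_nonneg τ)

private lemma M_cont (hm_int : Integrable m) :
    Continuous fun x => ∫ τ in Set.Iic x, m τ := by
  have h : ∀ x : ℝ, (∫ τ in Set.Iic x, m τ)
      = (∫ τ in Set.Iic (0:ℝ), m τ) + ∫ τ in (0:ℝ)..x, m τ := by
    intro x
    have := intervalIntegral.integral_Iic_sub_Iic (hm_int.integrableOn (s := Set.Iic (0:ℝ)))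
      (hm_int.integrableOn (s := Set.Iic x))
    linarith
  rw [show (fun x => ∫ τ in Set.Iic x, m τ)
      = fun x => (∫ τ in Set.Iic (0:ℝ), m τ) + ∫ τ in (0:ℝ)..x, m τ from funext h]
  exact continuous_const.add
    (intervalIntegral.continuous_primitive (fun a b => hm_int.intervalIntegrable) 0)

private lemma M_split {f : ℝ → ℝ} (hf : Integrable f) {a b : ℝ}
    (hab : a ≤ b) :
    (∫ τ in Set.Iic b, f τ) = (∫ τ in Set.Iic a, f τ) + ∫ τ in Set.Ioc a b, f τ := by
  rw [← setIntegral_union (Iic_disjoint_Ioc le_rfl) measurableSet_Ioc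
    hf.integrableOn hf.integrableOn, Iic_union_Ioc_eq_Iic hab]

private lemma pow_aux : ∀ (n : ℕ) (a : ℝ), 0 ≤ a →
    ((n : ℝ) + 1) * a ^ n + a ^ (n + 1) ≤ (a + 1) ^ (n + 1) := by
  intro n
  induction n with
  | zero => intro a _; norm_num; linarith
  | succ k ih =>
    intro a ha
    have h1 := ih a ha
    have h3 : (0:ℝ) ≤ a ^ k := pow_nonneg ha k
    have h4 : (0:ℝ) ≤ a ^ (k + 1) := pow_nonneg ha (k + 1)
    have h5 : a ^ (k + 1) = a * a ^ k := by ring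
    have h6 : a ^ (k + 1 + 1) = a * a ^ (k + 1) := by ring
    have h2 : (a + 1) ^ (k + 1 + 1) = (a + 1) * (a + 1) ^ (k + 1) := by ring
    push_cast
    nlinarith [mul_le_mul_of_nonneg_left h1 (by linarith : (0:ℝ) ≤ a + 1)]

private lemma sum_pow_le (n N : ℕ) :
    ((n : ℝ) + 1) * ∑ j ∈ Finset.range N, ((j:ℝ) + 1) ^ n ≤ ((N:ℝ) + 1) ^ (n + 1) := by
  rw [Finset.mul_sum]
  have key : ∑ j ∈ Finset.range N, ((n : ℝ) + 1) * ((j:ℝ) + 1) ^ n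
      ≤ ((N:ℝ) + 1) ^ (n+1) - ((0:ℝ) + 1) ^ (n+1) := by
    have hts := Finset.sum_range_sub (fun j : ℕ => ((j:ℝ) + 1) ^ (n+1)) N
    calc ∑ j ∈ Finset.range N, ((n : ℝ) + 1) * ((j:ℝ) + 1) ^ n
        ≤ ∑ j ∈ Finset.range N,
            (((↑(j+1) : ℝ) + 1) ^ (n+1) - ((j:ℝ) + 1) ^ (n+1)) := by
          apply Finset.sum_le_sum
          intro j _
          have := pow_aux n ((j:ℝ) + 1) (by positivity)
          push_cast
          linarith
      _ = ((N:ℝ) + 1) ^ (n+1) - ((0:ℝ) + 1) ^ (n+1) := by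
          rw [hts]; norm_num
  have : (0:ℝ) < ((0:ℝ) + 1) ^ (n+1) := by positivity
  linarith


private lemma f_int (hm_nonneg : ∀ τ : ℝ, 0 ≤ m τ) (hm_int : Integrable m) (n : ℕ) :
    Integrable (fun τ => m τ * (∫ σ in Set.Iic τ, m σ) ^ n) := by
  have hnn : ∀ y, 0 ≤ ∫ σ in Set.Iic y, m σ := M_nonneg hm_nonneg
  have hCle := M_le hm_nonneg hm_int
  have h := hm_int.bdd_mul (((M_cont hm_int).pow n).aestronglyMeasurable)
    (c := (∫ τ : ℝ, m τ) ^ n) (Eventually.of_forall fun y => by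
      show ‖(∫ σ in Set.Iic y, m σ) ^ n‖ ≤ _
      rw [Real.norm_eq_abs, abs_of_nonneg (pow_nonneg (hnn y) n)]
      exact pow_le_pow_left₀ (hnn y) (hCle y) n)
  exact h.congr (Eventually.of_forall fun τ => mul_comm _ _)

private lemma key_ineq (hm_nonneg : ∀ τ : ℝ, 0 ≤ m τ) (hm_int : Integrable m) (n : ℕ) (x : ℝ) :
    (∫ τ in Set.Iic x, m τ * (∫ σ in Set.Iic τ, m σ) ^ n)
      ≤ (∫ τ in Set.Iic x, m τ) ^ (n + 1) / ((n : ℝ) + 1) := by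
  set M : ℝ → ℝ := fun y => ∫ τ in Set.Iic y, m τ with hM
  have hmono : Monotone M := M_mono hm_nonneg hm_int
  have hnn : ∀ y, 0 ≤ M y := M_nonneg hm_nonneg
  have hcont : Continuous M := M_cont hm_int
  have hCle : ∀ y, M y ≤ ∫ τ : ℝ, m τ := M_le hm_nonneg hm_int
  have hf_int : Integrable (fun τ => m τ * M τ ^ n) := f_int hm_nonneg hm_int n
  have crude : ∀ s : ℝ, (∫ τ in Set.Iic s, m τ * M τ ^ n) ≤ M s ^ n * M s := by
    intro s
    have h1 : (∫ τ in Set.Iic s, m τ * M τ ^ n) ≤ ∫ τ in Set.Iic s, M s ^ n * m τ := by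
      apply setIntegral_mono_on hf_int.integrableOn (hm_int.integrableOn.const_mul _)
        measurableSet_Iic
      intro τ hτ
      rw [mul_comm]
      exact mul_le_mul_of_nonneg_right
        (pow_le_pow_left₀ (hnn τ) (hmono (mem_Iic.1 hτ)) n) (hm_nonneg τ)
    rwa [integral_const_mul] at h1
  have piece : ∀ a b : ℝ, a ≤ b →
      (∫ τ in Set.Ioc a b, m τ * M τ ^ n) ≤ M b ^ n * (M b - M a) := by
    intro a b hab
    have h1 : (∫ τ in Set.Ioc a b, m τ * M τ ^ n) ≤ ∫ τ in Set.Ioc a b, M b ^ n * m τ := by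
      apply setIntegral_mono_on hf_int.integrableOn (hm_int.integrableOn.const_mul _)
        measurableSet_Ioc
      intro τ hτ
      rw [mul_comm]
      exact mul_le_mul_of_nonneg_right
        (pow_le_pow_left₀ (hnn τ) (hmono hτ.2) n) (hm_nonneg τ)
    rw [integral_const_mul] at h1
    have h2 : (∫ τ in Set.Ioc a b, m τ) = M b - M a := by
      have := M_split hm_int hab
      simp only [hM]
      linarith
    rw [h2] at h1
    exact h1
  have hlim : ∀ x0 : ℝ, Tendsto (fun k : ℕ => M (x0 - k)) atTop (𝓝 0) := by
    intro x0
    have heq : ∀ k : ℕ, M (x0 - k) = ∫ τ, (Set.Iic (x0 - (k:ℝ))).indicator m τ := by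
      intro k; rw [integral_indicator measurableSet_Iic]
    rw [show (fun k : ℕ => M (x0 - k)) = _ from funext heq,
      show (0:ℝ) = ∫ τ : ℝ, (0:ℝ) by simp]
    apply tendsto_integral_of_dominated_convergence m
      (fun k => hm_int.aestronglyMeasurable.indicator measurableSet_Iic) hm_int
    · intro k
      refine Eventually.of_forall fun τ => ?_
      rw [Real.norm_eq_abs]
      rcases le_or_gt τ (x0 - (k:ℝ)) with h | h
      · rw [Set.indicator_of_mem (mem_Iic.2 h), abs_of_nonneg (hm_nonneg τ)]
      · rw [Set.indicator_of_notMem (by simpa using h)]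
        simpa using hm_nonneg τ
    · refine Eventually.of_forall fun τ => ?_
      have hev : ∀ᶠ k : ℕ in atTop, (Set.Iic (x0 - (k:ℝ))).indicator m τ = 0 := by
        filter_upwards [tendsto_natCast_atTop_atTop.eventually_gt_atTop (x0 - τ)] with k hk
        exact Set.indicator_of_notMem (by simp only [mem_Iic, not_le]; linarith) m
      exact Tendsto.congr' (hev.mono fun k hk => hk.symm) tendsto_const_nhds
  have hivt : ∀ b y : ℝ, 0 < y → y ≤ M b → ∃ s, s ≤ b ∧ M s = y := by
    intro b y hy hyb
    obtain ⟨k, hk⟩ := ((hlim b).eventually_lt_const hy).exists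
    have hkb : b - (k:ℝ) ≤ b := by
      have : (0:ℝ) ≤ (k:ℝ) := Nat.cast_nonneg k
      linarith
    obtain ⟨s, hs, hMs⟩ := intermediate_value_Icc hkb hcont.continuousOn ⟨hk.le, hyb⟩
    exact ⟨s, hs.2, hMs⟩
  set c : ℝ := M x with hc
  rcases (hnn x).eq_or_lt with hc0 | hcpos
  · have h := crude x
    have hz : M x ^ n * M x = 0 := by rw [← hc0]; ring
    rw [hz] at h
    calc (∫ τ in Set.Iic x, m τ * M τ ^ n) ≤ 0 := h
      _ ≤ M x ^ (n+1) / ((n : ℝ) + 1) := by positivity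
  · have main : ∀ N : ℕ, ∀ i : ℕ, 1 ≤ i → ∀ s, s ≤ x → M s = i * (c / N) →
        (∫ τ in Set.Iic s, m τ * M τ ^ n)
          ≤ (c / N) ^ (n + 1) * ∑ j ∈ Finset.range i, ((j:ℝ) + 1) ^ n := by
      intro N i
      induction i with
      | zero => intro h; omega
      | succ i ih =>
        intro _ s hsx hMs
        have hh0 : 0 ≤ c / N := div_nonneg hcpos.le (Nat.cast_nonneg N)
        rcases hh0.eq_or_lt with hh | hh
        · -- c / N = 0
          have hMs0 : M s = 0 := by rw [hMs, ← hh]; ring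
          have h := crude s
          rw [hMs0] at h
          have hrhs : (c / N) ^ (n+1) * ∑ j ∈ Finset.range (i+1), ((j:ℝ) + 1) ^ n = 0 := by
            rw [← hh]; simp
          rw [hrhs]
          simpa using h
        · rcases Nat.eq_zero_or_pos i with hi0 | hi1
          · subst hi0
            have h := crude s
            rw [hMs] at h
            norm_num at h
            simpa [Finset.sum_range_one, pow_succ] using h
          · have hipos : (0:ℝ) < (i:ℝ) := by exact_mod_cast hi1
            have hy : (0:ℝ) < (i:ℝ) * (c / N) := mul_pos hipos hh
            have hyMs : (i:ℝ) * (c / N) ≤ M s := by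
              rw [hMs]; push_cast; nlinarith
            obtain ⟨s', hs's, hMs'⟩ := hivt s _ hy hyMs
            have hsplit := M_split hf_int hs's
            have h1 := ih hi1 s' (hs's.trans hsx) hMs'
            have h2 := piece s' s hs's
            rw [hMs, hMs'] at h2
            rw [Finset.sum_range_succ, mul_add]
            calc (∫ τ in Set.Iic s, m τ * M τ ^ n)
                = (∫ τ in Set.Iic s', m τ * M τ ^ n)
                  + ∫ τ in Set.Ioc s' s, m τ * M τ ^ n := hsplit
              _ ≤ (c / N) ^ (n + 1) * ∑ j ∈ Finset.range i, ((j:ℝ) + 1) ^ n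
                  + ((↑(i+1) : ℝ) * (c / N)) ^ n
                    * ((↑(i+1) : ℝ) * (c / N) - (i:ℝ) * (c / N)) := add_le_add h1 h2
              _ = (c / N) ^ (n + 1) * ∑ j ∈ Finset.range i, ((j:ℝ) + 1) ^ n
                  + (c / N) ^ (n + 1) * ((i:ℝ) + 1) ^ n := by
                  push_cast
                  rw [mul_pow]
                  ring
    have bound : ∀ N : ℕ, 1 ≤ N → (∫ τ in Set.Iic x, m τ * M τ ^ n)
        ≤ c ^ (n+1) / ((n:ℝ) + 1) * (((N:ℝ) + 1) / N) ^ (n+1) := by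
      intro N hN
      have hNpos : (0:ℝ) < N := by exact_mod_cast hN
      have hMx : M x = N * (c / N) := by field_simp; exact hc.symm
      have h1 := main N N hN x le_rfl hMx
      have h2 := sum_pow_le n N
      have h3 : ∑ j ∈ Finset.range N, ((j:ℝ) + 1) ^ n ≤ ((N:ℝ) + 1) ^ (n+1) / ((n:ℝ) + 1) := by
        rw [le_div_iff₀ (by positivity)]
        linarith
      calc (∫ τ in Set.Iic x, m τ * M τ ^ n)
          ≤ (c / N) ^ (n + 1) * ∑ j ∈ Finset.range N, ((j:ℝ) + 1) ^ n := h1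
        _ ≤ (c / N) ^ (n + 1) * (((N:ℝ) + 1) ^ (n+1) / ((n:ℝ) + 1)) := by
            exact mul_le_mul_of_nonneg_left h3 (by positivity)
        _ = c ^ (n+1) / ((n:ℝ) + 1) * (((N:ℝ) + 1) / N) ^ (n+1) := by
            rw [div_pow, div_pow]
            ring
    have htend : Tendsto (fun N : ℕ => c ^ (n+1) / ((n:ℝ) + 1) * (((N:ℝ) + 1) / N) ^ (n+1))
        atTop (𝓝 (c ^ (n+1) / ((n:ℝ) + 1))) := by
      have h0 : Tendsto (fun N : ℕ => ((N:ℝ) + 1) / N) atTop (𝓝 1) := by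
        have hev : (fun N : ℕ => (1:ℝ) + 1 / N) =ᶠ[atTop] fun N : ℕ => ((N:ℝ) + 1) / N := by
          filter_upwards [eventually_gt_atTop 0] with N hN
          have : (N:ℝ) ≠ 0 := by positivity
          field_simp
        rw [← tendsto_congr' hev]
        simpa using (tendsto_const_nhds (x := (1:ℝ))).add tendsto_one_div_atTop_nhds_zero_nat
      have h1 := h0.pow (n+1)
      simpa using h1.const_mul (c ^ (n+1) / ((n:ℝ) + 1))
    exact ge_of_tendsto htend (eventually_atTop.2 ⟨1, fun N hN => bound N hN⟩)

end Aux



attribute [local instance] Matrix.linftyOpNormedAddCommGroup Matrix.linftyOpNormedSpace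
  Matrix.linftyOpNormedRing Matrix.linftyOpNormedAlgebra

/-- Picard/Neumann iteration bound: the iterates of the Volterra integral equation with
integrable kernel bound `m` satisfy the factorial bounds
`‖v n x‖ ≤ (∫_{-∞}^{x} m)ⁿ / n!`; consequently the Neumann series converges absolutely
and uniformly on `ℝ`, with sum bounded by `exp(∫ m)`. -/
theorem neumann_series_factorial_bound (m : ℝ → ℝ)
    (hm_nonneg : ∀ τ : ℝ, 0 ≤ m τ) (hm_int : Integrable m)
    (K : ℝ → ℝ → Matrix (Fin 2) (Fin 2) ℂ)
    (hK_meas : ∀ i j : Fin 2, Measurable fun p : ℝ × ℝ => K p.1 p.2 i j)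
    (hK_bound : ∀ x τ : ℝ, τ ≤ x → ‖K x τ‖ ≤ m τ)
    (v : ℕ → ℝ → Fin 2 → ℂ)
    (hv0 : ∀ x : ℝ, ‖v 0 x‖ ≤ 1)
    (hv : ∀ (n : ℕ) (x : ℝ), v (n + 1) x = ∫ τ in Set.Iic x, (K x τ).mulVec (v n τ)) :
    (∀ (n : ℕ) (x : ℝ), ‖v n x‖ ≤ (∫ τ in Set.Iic x, m τ) ^ n / n.factorial) ∧
    (∀ x : ℝ, Summable fun n : ℕ => ‖v n x‖) ∧
    TendstoUniformly (fun (N : ℕ) (x : ℝ) => ∑ n ∈ Finset.range N, v n x)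
      (fun x : ℝ => ∑' n : ℕ, v n x) Filter.atTop ∧
    ∀ x : ℝ, ‖∑' n : ℕ, v n x‖ ≤ Real.exp (∫ τ : ℝ, m τ) := by
  have hnn : ∀ y : ℝ, 0 ≤ ∫ τ in Set.Iic y, m τ := M_nonneg hm_nonneg
  have hCle : ∀ y : ℝ, (∫ τ in Set.Iic y, m τ) ≤ ∫ τ : ℝ, m τ := M_le hm_nonneg hm_int
  have part1 : ∀ (n : ℕ) (x : ℝ),
      ‖v n x‖ ≤ (∫ τ in Set.Iic x, m τ) ^ n / n.factorial := by
    intro n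
    induction n with
    | zero => intro x; simpa using hv0 x
    | succ n ih =>
      intro x
      rw [hv n x]
      have hbound : ∀ᵐ τ ∂(volume.restrict (Set.Iic x)),
          ‖(K x τ).mulVec (v n τ)‖
            ≤ m τ * (∫ σ in Set.Iic τ, m σ) ^ n / n.factorial := by
        rw [ae_restrict_iff' measurableSet_Iic]
        refine Eventually.of_forall fun τ hτ => ?_
        calc ‖(K x τ).mulVec (v n τ)‖ ≤ ‖K x τ‖ * ‖v n τ‖ := linfty_opNorm_mulVec _ _
          _ ≤ m τ * ((∫ σ in Set.Iic τ, m σ) ^ n / n.factorial) :=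
              mul_le_mul (hK_bound x τ hτ) (ih τ) (norm_nonneg _) (hm_nonneg τ)
          _ = m τ * (∫ σ in Set.Iic τ, m σ) ^ n / n.factorial := by ring
      have hg_int : Integrable
          (fun τ => m τ * (∫ σ in Set.Iic τ, m σ) ^ n / n.factorial)
          (volume.restrict (Set.Iic x)) :=
        ((f_int hm_nonneg hm_int n).div_const _).restrict
      calc ‖∫ τ in Set.Iic x, (K x τ).mulVec (v n τ)‖
          ≤ ∫ τ in Set.Iic x, m τ * (∫ σ in Set.Iic τ, m σ) ^ n / n.factorial :=
            norm_integral_le_of_norm_le hg_int hbound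
        _ = (∫ τ in Set.Iic x, m τ * (∫ σ in Set.Iic τ, m σ) ^ n) / n.factorial :=
            integral_div _ _
        _ ≤ ((∫ τ in Set.Iic x, m τ) ^ (n + 1) / ((n : ℝ) + 1)) / n.factorial := by
            have hfac : (0:ℝ) < n.factorial := by exact_mod_cast n.factorial_pos
            exact (div_le_div_iff_of_pos_right hfac).2 (key_ineq hm_nonneg hm_int n x)
        _ = (∫ τ in Set.Iic x, m τ) ^ (n + 1) / (n + 1).factorial := by
            rw [div_div, Nat.factorial_succ]
            push_cast
            ring_nf
  have hle : ∀ (n : ℕ) (x : ℝ),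
      (∫ τ in Set.Iic x, m τ) ^ n / (n.factorial : ℝ)
        ≤ (∫ τ : ℝ, m τ) ^ n / n.factorial := by
    intro n x
    exact div_le_div_of_nonneg_right (pow_le_pow_left₀ (hnn x) (hCle x) n) (Nat.cast_nonneg _)
  have hbig : ∀ (n : ℕ) (x : ℝ), ‖v n x‖ ≤ (∫ τ : ℝ, m τ) ^ n / n.factorial :=
    fun n x => (part1 n x).trans (hle n x)
  have hsummable := Real.summable_pow_div_factorial (∫ τ : ℝ, m τ)
  have part2 : ∀ x : ℝ, Summable fun n : ℕ => ‖v n x‖ := fun x =>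
    Summable.of_nonneg_of_le (fun n => norm_nonneg _) (fun n => hbig n x) hsummable
  refine ⟨part1, part2, tendstoUniformly_tsum_nat hsummable hbig, fun x => ?_⟩
  calc ‖∑' n : ℕ, v n x‖ ≤ ∑' n : ℕ, ‖v n x‖ := norm_tsum_le_tsum_norm (part2 x)
    _ ≤ ∑' n : ℕ, (∫ τ : ℝ, m τ) ^ n / n.factorial :=
        Summable.tsum_le_tsum (fun n => hbig n x) (part2 x) hsummable
    _ = Real.exp (∫ τ : ℝ, m τ) := by
        rw [Real.exp_eq_exp_ℝ, NormedSpace.exp_eq_tsum_div]
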